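/- Let P be a non-negative self-adjoint operator on a Hilbert space and B a symmetric operator which is relatively bounded with respect to P with relative bound a < 1, and B ≥ 0. Then for the operator H = P − iB with domain Dom(P): for any c > 0 there exist constants such that for all n ∈ ℕ and z with Im z > 0 and Re(z) ≤ −c < 0, ‖(H−z)^{-(n+1)}‖ ≤ C/|Re(z)|^{n+1}. -/

import Mathlib

open Complex

/-- `R` is a two-sided bounded inverse of `H - z`. -/
def IsResolventAt {𝓗 : Type*} [NormedAddCommGroup 𝓗] [InnerProductSpace ℂ 𝓗]
    (D : Submodule ℂ 𝓗) (H : D →ₗ[ℂ] 𝓗) (z : ℂ) (R : 𝓗 →L[ℂ] 𝓗) : Prop :=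
  (∀ φ : D, R (H φ - z • (φ : 𝓗)) = φ) ∧
  (∀ u : 𝓗, ∃ φ : D, (φ : 𝓗) = R u ∧ H φ - z • (φ : 𝓗) = u)

/-- Let `P` be non-negative self-adjoint (symmetric, non-negative, with
`±i` in its resolvent set), and `B` symmetric, non-negative and `P`-bounded with relative
bound `a < 1`. For `H = P - iB` (domain `Dom P`): for every `c > 0` there is `C` such that
for all `n ∈ ℕ` and `z` with `Im z > 0` and `Re z ≤ -c`, `‖(H - z)⁻¹ ^ (n+1)‖ ≤ C / |Re z|^(n+1)`. -/
theorem stmt3 {𝓗 : Type*} [NormedAddCommGroup 𝓗] [InnerProductSpace ℂ 𝓗] [CompleteSpace 𝓗]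
    (D : Submodule ℂ 𝓗) (hdense : Dense (D : Set 𝓗))
    (P B : D →ₗ[ℂ] 𝓗)
    (hPsym : ∀ φ ψ : D, (inner ℂ (P φ) (ψ : 𝓗) : ℂ) = inner ℂ (φ : 𝓗) (P ψ))
    (hPpos : ∀ φ : D, 0 ≤ (inner ℂ (P φ) (φ : 𝓗) : ℂ).re)
    (hPsa₁ : ∃ R : 𝓗 →L[ℂ] 𝓗, IsResolventAt D P Complex.I R)
    (hPsa₂ : ∃ R : 𝓗 →L[ℂ] 𝓗, IsResolventAt D P (-Complex.I) R)
    (hBsym : ∀ φ ψ : D, (inner ℂ (B φ) (ψ : 𝓗) : ℂ) = inner ℂ (φ : 𝓗) (B ψ))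
    (hBpos : ∀ φ : D, 0 ≤ (inner ℂ (B φ) (φ : 𝓗) : ℂ).re)
    (hrel : ∃ a b : ℝ, 0 ≤ a ∧ a < 1 ∧ ∀ φ : D, ‖B φ‖ ≤ a * ‖P φ‖ + b * ‖φ‖) :
    ∀ c : ℝ, 0 < c → ∃ C : ℝ, ∀ (n : ℕ) (z : ℂ) (R : 𝓗 →L[ℂ] 𝓗),
      0 < z.im → z.re ≤ -c →
      IsResolventAt D (P - Complex.I • B) z R →
      ‖R ^ (n + 1)‖ ≤ C / |z.re| ^ (n + 1) := by
  intro c hc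
  refine ⟨1, ?_⟩
  intro n z R hzim hzre hR
  have hzre' : z.re < 0 := lt_of_le_of_lt hzre (by linarith)
  have habs : |z.re| = -z.re := abs_of_neg hzre'
  have hre : 0 < |z.re| := by rw [habs]; linarith
  -- the key resolvent bound ‖R‖ ≤ 1/|Re z|
  have hRnorm : ‖R‖ ≤ 1 / |z.re| := by
    apply ContinuousLinearMap.opNorm_le_bound _ (by positivity)
    intro u
    obtain ⟨φ, hφ, hu⟩ := hR.2 u
    rw [← hφ]
    by_cases h0 : ‖(φ : 𝓗)‖ = 0
    · rw [h0]; positivity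
    have hφpos : 0 < ‖(φ : 𝓗)‖ := lt_of_le_of_ne (norm_nonneg _) (Ne.symm h0)
    -- ⟨Bφ,φ⟩ is real
    have hw : (inner ℂ (B φ) ((φ : D) : 𝓗) : ℂ).im = 0 := by
      have h1 : (inner ℂ (B φ) ((φ : D) : 𝓗) : ℂ)
          = starRingEnd ℂ (inner ℂ (B φ) ((φ : D) : 𝓗) : ℂ) := by
        conv_lhs => rw [hBsym φ φ, ← inner_conj_symm]
      exact Complex.conj_eq_iff_im.mp h1.symm
    -- compute the real part of ⟨(H - z)φ, φ⟩
    have hE : ((inner ℂ ((P - Complex.I • B) φ - z • ((φ : D) : 𝓗)) ((φ : D) : 𝓗)) : ℂ).re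
        = (inner ℂ (P φ) ((φ : D) : 𝓗) : ℂ).re - z.re * ‖((φ : D) : 𝓗)‖ ^ 2 := by
      have hHφ : (P - Complex.I • B) φ = P φ - Complex.I • B φ := rfl
      have hs : (inner ℂ ((φ : D) : 𝓗) ((φ : D) : 𝓗) : ℂ) = ((‖((φ : D) : 𝓗)‖ ^ 2 : ℝ) : ℂ) := by
        exact_mod_cast inner_self_eq_norm_sq_to_K (𝕜 := ℂ) ((φ : D) : 𝓗)
      rw [hHφ, inner_sub_left, inner_sub_left, inner_smul_left, inner_smul_left, hs]
      simp only [Complex.sub_re, Complex.mul_re, Complex.conj_re, Complex.conj_im,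
        Complex.I_re, Complex.I_im, Complex.ofReal_re, Complex.ofReal_im, hw]
      ring
    have hlow : |z.re| * ‖(φ : 𝓗)‖ ^ 2
        ≤ ((inner ℂ ((P - Complex.I • B) φ - z • ((φ : D) : 𝓗)) ((φ : D) : 𝓗)) : ℂ).re := by
      rw [hE, habs]
      have := hPpos φ
      nlinarith [sq_nonneg ‖((φ : D) : 𝓗)‖]
    have hhi : ((inner ℂ ((P - Complex.I • B) φ - z • ((φ : D) : 𝓗)) ((φ : D) : 𝓗)) : ℂ).re
        ≤ ‖u‖ * ‖(φ : 𝓗)‖ := by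
      calc ((inner ℂ ((P - Complex.I • B) φ - z • ((φ : D) : 𝓗)) ((φ : D) : 𝓗)) : ℂ).re
          ≤ ‖(inner ℂ ((P - Complex.I • B) φ - z • ((φ : D) : 𝓗)) ((φ : D) : 𝓗) : ℂ)‖ :=
            Complex.re_le_norm _
        _ ≤ ‖(P - Complex.I • B) φ - z • ((φ : D) : 𝓗)‖ * ‖((φ : D) : 𝓗)‖ :=
            norm_inner_le_norm _ _
        _ = ‖u‖ * ‖(φ : 𝓗)‖ := by rw [hu]
    have hkey : |z.re| * ‖(φ : 𝓗)‖ ≤ ‖u‖ := by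
      have := le_trans hlow hhi
      nlinarith
    rw [div_mul_eq_mul_div, one_mul, le_div_iff₀ hre]
    nlinarith
  calc ‖R ^ (n + 1)‖ ≤ ‖R‖ ^ (n + 1) := norm_pow_le' R n.succ_pos
    _ ≤ (1 / |z.re|) ^ (n + 1) :=
        pow_le_pow_left₀ (norm_nonneg R) hRnorm _
    _ = 1 / |z.re| ^ (n + 1) := by rw [one_div, one_div, inv_pow]
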